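/- Fix (c,d) ∈ (−1,1)² with (c,d) ≠ (0,0) and let b > 1. Then: (i) if b < 1 + √2, then ψ((1+2b−b²)/(1+b²), b, c, d) < 0 and ψ((1+b²)/(1+2b−b²), b, c, d) > 0; (ii) if b ≥ 1 + √2, then ψ(0,b,c,d) < 0 and there exists A > 0 such that ψ(a,b,c,d) > 0 for all a ≥ A. -/

import Mathlib

noncomputable def psi (a b c d : ℝ) : ℝ :=
  (a^2 - 1) * (b^2 + 1) * (a^2*b^2 + a^2 + a*b^2 - a + b^2 + 1) * (c^2 + d^2 - 2*c^2*d^2)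
    + a * (b^2 - 1) * (a^2*b^2 + a^2 + 2*a*b^2 - 4*a*b - 2*a + b^2 + 1) * c * d * (c^2 - d^2)

set_option maxHeartbeats 1000000 in
theorem wall_lemma (b c d : ℝ)
    (hc : c ∈ Set.Ioo (-1 : ℝ) 1) (hd : d ∈ Set.Ioo (-1 : ℝ) 1)
    (hcd : (c, d) ≠ (0, 0)) (hb : 1 < b) :
    (b < 1 + Real.sqrt 2 →
      psi ((1 + 2*b - b^2) / (1 + b^2)) b c d < 0 ∧
      0 < psi ((1 + b^2) / (1 + 2*b - b^2)) b c d) ∧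
    (1 + Real.sqrt 2 ≤ b →
      psi 0 b c d < 0 ∧ ∃ A : ℝ, 0 < A ∧ ∀ a : ℝ, A ≤ a → 0 < psi a b c d) := by
  obtain ⟨hc1, hc2⟩ := hc
  obtain ⟨hd1, hd2⟩ := hd
  have hb0 : (0:ℝ) < b := by linarith
  have hb1 : (0:ℝ) < b - 1 := by linarith
  have hcd' : c ≠ 0 ∨ d ≠ 0 := by
    by_contra h
    push_neg at h
    exact hcd (by simp [h.1, h.2])
  set Q : ℝ := c^2 + d^2 - 2*c^2*d^2 with hQdef
  set t : ℝ := c*d*(c^2 - d^2) with htdef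
  have hQ : 0 < Q := by
    rcases hcd' with h | h
    · have h1 : 0 < c^2 := by positivity
      nlinarith [mul_pos h1 (show (0:ℝ) < 1 - d^2 by nlinarith),
        mul_nonneg (sq_nonneg d) (show (0:ℝ) ≤ 1 - c^2 by nlinarith)]
    · have h1 : 0 < d^2 := by positivity
      nlinarith [mul_pos h1 (show (0:ℝ) < 1 - c^2 by nlinarith),
        mul_nonneg (sq_nonneg c) (show (0:ℝ) ≤ 1 - d^2 by nlinarith)]
  have ht1 : t ≤ Q := by
    nlinarith [mul_nonneg (show (0:ℝ) ≤ 1 - d^2 by nlinarith) (sq_nonneg (c - d)),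
      mul_nonneg (show (0:ℝ) ≤ 1 - c^2 by nlinarith) (sq_nonneg (c + d)),
      sq_nonneg (c^2 - d^2)]
  have ht2 : -Q ≤ t := by
    nlinarith [mul_nonneg (show (0:ℝ) ≤ 1 - c^2 by nlinarith) (sq_nonneg (c - d)),
      mul_nonneg (show (0:ℝ) ≤ 1 - d^2 by nlinarith) (sq_nonneg (c + d)),
      sq_nonneg (c^2 - d^2)]
  have hs2 : Real.sqrt 2 * Real.sqrt 2 = 2 := Real.mul_self_sqrt (by norm_num)
  constructor
  · intro hblt
    have hw : (0:ℝ) < 1 + 2*b - b^2 := by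
      have h1 : (0:ℝ) < Real.sqrt 2 - (b - 1) := by linarith
      have h2 : (0:ℝ) < Real.sqrt 2 + (b - 1) := by
        have := Real.sqrt_nonneg 2; linarith
      nlinarith [mul_pos h1 h2]
    have hx : (0:ℝ) < 1 + b^2 := by positivity
    set F : ℝ := -4*b*(b-1)*(b+1)*(b^2+1)^2*(b^4 - 2*b^3 + 6*b^2 + 2*b + 1) with hFdef
    set G : ℝ := 4*b*(b-1)^2*(b+1)^2*(b^2+1)^2*(1 + 2*b - b^2) with hGdef
    have hG : 0 < G := by
      have : G = (4*b) * ((b-1)^2 * ((b+1)^2 * ((b^2+1)^2 * (1 + 2*b - b^2)))) := by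
        rw [hGdef]; ring
      rw [this]
      exact mul_pos (by linarith) (mul_pos (pow_pos hb1 2)
        (mul_pos (pow_pos (by linarith : (0:ℝ) < b+1) 2)
          (mul_pos (pow_pos (by positivity : (0:ℝ) < b^2+1) 2) hw)))
    have hFG : F + G < 0 := by
      have h1 : F + G = -((8*b) * ((b-1) * ((b+1) * ((b^2+1)^2 * ((b^2-b)^2 + (b+1)^2))))) := by
        rw [hFdef, hGdef]; ring
      rw [h1, neg_lt, neg_zero]
      exact mul_pos (by linarith) (mul_pos hb1 (mul_pos (by linarith)
        (mul_pos (pow_pos (by positivity : (0:ℝ) < b^2+1) 2)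
          (by positivity))))
    constructor
    · have key1 : psi ((1 + 2*b - b^2) / (1 + b^2)) b c d = (F*Q + G*t) / (1 + b^2)^4 := by
        rw [hFdef, hGdef, hQdef, htdef]
        unfold psi
        field_simp
        ring
      rw [key1]
      apply div_neg_of_neg_of_pos _ (by positivity)
      nlinarith [mul_neg_of_neg_of_pos hFG hQ, mul_nonneg hG.le (sub_nonneg.2 ht1)]
    · have key2 : psi ((1 + b^2) / (1 + 2*b - b^2)) b c d = (-F*Q + G*t) / (1 + 2*b - b^2)^4 := by
        rw [hFdef, hGdef, hQdef, htdef]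
        unfold psi
        have hw' := hw.ne'
        generalize hW : 1 + 2*b - b^2 = w at hw' ⊢
        field_simp
        rw [← hW]
        ring
      rw [key2]
      apply div_pos _ (by positivity)
      nlinarith [mul_neg_of_neg_of_pos hFG hQ, mul_nonneg hG.le (show (0:ℝ) ≤ t + Q by linarith)]
  · intro hbge
    have hsqrt2 : Real.sqrt 2 ≤ b - 1 := by linarith
    have hs : 2*b + 1 ≤ b^2 := by
      have h1 : Real.sqrt 2 * Real.sqrt 2 ≤ (b-1)*(b-1) :=
        mul_le_mul hsqrt2 hsqrt2 (Real.sqrt_nonneg 2) (by linarith)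
      nlinarith
    constructor
    · have h0 : psi 0 b c d = -((b^2+1)^2 * Q) := by
        rw [hQdef]; unfold psi; ring
      rw [h0, neg_lt, neg_zero]
      exact mul_pos (by positivity) hQ
    · refine ⟨2, by norm_num, fun a ha => ?_⟩
      have hu : (0:ℝ) ≤ a - 2 := by linarith
      have ha0 : (0:ℝ) < a := by linarith
      have hh : 0 < (a^2-1)*(b^2+1)*((b^2+1)*a^2 + (b^2-1)*a + (b^2+1))
          - a*(b^2-1)*((b^2+1)*a^2 + (2*b^2-4*b-2)*a + (b^2+1)) := by
        have expand : (a^2-1)*(b^2+1)*((b^2+1)*a^2 + (b^2-1)*a + (b^2+1))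
            - a*(b^2-1)*((b^2+1)*a^2 + (2*b^2-4*b-2)*a + (b^2+1))
            = (3*b^4 + 16*b^3 + 46*b^2 - 16*b + 11)
              + (22*b^4 + 16*b^3 + 80*b^2 - 16*b + 26)*(a-2)
              + (22*b^4 + 4*b^3 + 52*b^2 - 4*b + 22)*(a-2)^2
              + (8*b^4 + 16*b^2 + 8)*(a-2)^3
              + (b^4 + 2*b^2 + 1)*(a-2)^4 := by ring
        rw [expand]
        have c0 : (0:ℝ) < 3*b^4 + 16*b^3 + 46*b^2 - 16*b + 11 := by nlinarith [sq_nonneg b, sq_nonneg (b-1)]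
        have c1 : (0:ℝ) ≤ (22*b^4 + 16*b^3 + 80*b^2 - 16*b + 26)*(a-2) :=
          mul_nonneg (by nlinarith [sq_nonneg b, sq_nonneg (b-1)]) hu
        have c2 : (0:ℝ) ≤ (22*b^4 + 4*b^3 + 52*b^2 - 4*b + 22)*(a-2)^2 :=
          mul_nonneg (by nlinarith [sq_nonneg b, sq_nonneg (b-1)]) (sq_nonneg _)
        have c3 : (0:ℝ) ≤ (8*b^4 + 16*b^2 + 8)*(a-2)^3 :=
          mul_nonneg (by positivity) (pow_nonneg hu 3)
        have c4 : (0:ℝ) ≤ (b^4 + 2*b^2 + 1)*(a-2)^4 :=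
          mul_nonneg (by positivity) (pow_nonneg hu 4)
        linarith
      have hR : 0 < (b^2+1)*a^2 + (2*b^2-4*b-2)*a + (b^2+1) := by
        have h1 : (0:ℝ) ≤ (2*b^2-4*b-2)*a := mul_nonneg (by linarith) ha0.le
        nlinarith [mul_pos (show (0:ℝ) < b^2+1 by positivity) (mul_pos ha0 ha0)]
      have hK : 0 ≤ a*(b^2-1)*((b^2+1)*a^2 + (2*b^2-4*b-2)*a + (b^2+1)) :=
        mul_nonneg (mul_nonneg ha0.le (by nlinarith)) hR.le
      have hfin := mul_pos hh hQ
      have hfin2 := mul_nonneg hK (show (0:ℝ) ≤ t + Q by linarith)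
      rw [htdef] at hfin2
      unfold psi
      nlinarith [hfin, hfin2]
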